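/- Let p be an odd prime, let ψ : (ℚ_p,+) → ℂ^× be an additive character with conductor pℤ_p, and let μ be an additive Haar measure on ℚ_p. Let B, C ∈ ℚ_p^× satisfy v(C) = v(B) + 1 and v(C) ≤ 0. For an integer ℓ ≥ 0 let T_ℓ = {(a,b,c) ∈ ℚ_p³ : a, b, c ∈ p^{-ℓ}ℤ_p and a² + b·c ∈ ℤ_p}. Then there exists L such that for all integers ℓ ≥ L, the integral over T_ℓ of ψ(b·C + c·B) with respect to the product measure μ³ equals 0. -/

import Mathlib

open MeasureTheory

set_option linter.unusedSectionVars false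

namespace PadicVanishAux

variable {p : ℕ} [hfp : Fact p.Prime]

lemma one_lt_p : (1:ℝ) < p := by
  exact_mod_cast hfp.out.one_lt

lemma p_pos : (0:ℝ) < p := lt_trans one_pos one_lt_p

lemma norm_le_inv_p_of_lt_one {z : ℚ_[p]} (h : ‖z‖ < 1) : ‖z‖ ≤ (p:ℝ)⁻¹ := by
  rcases eq_or_ne z 0 with rfl | hz
  · simp
  · rw [Padic.norm_eq_zpow_neg_valuation hz] at h ⊢
    have h1 : (p:ℝ) ^ (-z.valuation) < (p:ℝ) ^ (0:ℤ) := by simpa using h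
    have h2 := (zpow_lt_zpow_iff_right₀ one_lt_p).mp h1
    calc (p:ℝ) ^ (-z.valuation) ≤ (p:ℝ) ^ (-1:ℤ) :=
          zpow_le_zpow_right₀ one_lt_p.le (by omega)
      _ = (p:ℝ)⁻¹ := by simp

lemma norm_le_one_of_lt_p {z : ℚ_[p]} (h : ‖z‖ < p) : ‖z‖ ≤ 1 := by
  rcases eq_or_ne z 0 with rfl | hz
  · simp
  · rw [Padic.norm_eq_zpow_neg_valuation hz] at h ⊢
    have h1 : (p:ℝ) ^ (-z.valuation) < (p:ℝ) ^ (1:ℤ) := by simpa using h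
    have h2 := (zpow_lt_zpow_iff_right₀ one_lt_p).mp h1
    calc (p:ℝ) ^ (-z.valuation) ≤ (p:ℝ) ^ (0:ℤ) :=
          zpow_le_zpow_right₀ one_lt_p.le (by omega)
      _ = 1 := by simp

lemma norm_eq_one_of_sub_lt {s : ℚ_[p]} (h : ‖s - 1‖ < 1) : ‖s‖ = 1 := by
  have hs : s = 1 + (s - 1) := by ring
  rw [hs, Padic.add_eq_max_of_ne (by rw [norm_one]; exact (ne_of_lt h).symm)]
  rw [norm_one]
  exact max_eq_left h.le

/-- parity contradiction -/
lemma no_parity {a b c : ℚ_[p]} (habc : ‖a ^ 2 + b * c‖ ≤ 1)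
    (hb0 : b ≠ 0) (hc0 : c ≠ 0) (hbn : ‖b‖ = p * ‖c‖)
    (hnot : ¬(‖b‖ ≤ 1 ∧ ‖c‖ ≤ 1)) : False := by
  have hp0 : (p:ℝ) ≠ 0 := ne_of_gt p_pos
  rcases le_or_gt 1 c.valuation with hm | hm
  · -- c small : both in Zp, contradiction
    apply hnot
    have hcle : ‖c‖ ≤ (p:ℝ)⁻¹ := by
      rw [Padic.norm_eq_zpow_neg_valuation hc0]
      calc (p:ℝ) ^ (-c.valuation) ≤ (p:ℝ) ^ (-1:ℤ) :=
            zpow_le_zpow_right₀ one_lt_p.le (by omega)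
        _ = (p:ℝ)⁻¹ := by simp
    constructor
    · rw [hbn]
      calc (p:ℝ) * ‖c‖ ≤ (p:ℝ) * (p:ℝ)⁻¹ := by
            apply mul_le_mul_of_nonneg_left hcle p_pos.le
        _ = 1 := mul_inv_cancel₀ hp0
    · exact le_trans hcle (by
        rw [← inv_one]
        exact inv_anti₀ one_pos (by exact_mod_cast hfp.out.one_lt.le))
  · -- c big : parity contradiction
    have hbc : ‖b * c‖ = (p:ℝ) ^ (1 - 2 * c.valuation) := by
      rw [norm_mul, hbn, Padic.norm_eq_zpow_neg_valuation hc0]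
      rw [show (1 - 2 * c.valuation) = (-c.valuation) + (-c.valuation) + 1 by ring,
        zpow_add₀ hp0, zpow_add₀ hp0, zpow_one]
      ring
    have h1 : 1 < ‖b * c‖ := by
      rw [hbc]
      calc (1:ℝ) = (p:ℝ) ^ (0:ℤ) := by simp
        _ < (p:ℝ) ^ (1 - 2 * c.valuation) := by
            apply zpow_lt_zpow_right₀ one_lt_p
            omega
    have ha2 : ‖a ^ 2‖ = ‖b * c‖ := by
      by_contra hne
      have := Padic.add_eq_max_of_ne hne
      rw [this] at habc
      have : 1 < max ‖a ^ 2‖ ‖b * c‖ := lt_of_lt_of_le h1 (le_max_right _ _)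
      linarith
    have ha0 : a ≠ 0 := by
      rintro rfl
      rw [show ((0:ℚ_[p]) ^ 2) = 0 by ring] at ha2
      simp at ha2
      tauto
    have hkey : (p:ℝ) ^ (-(2 * a.valuation)) = (p:ℝ) ^ (1 - 2 * c.valuation) := by
      rw [← hbc, ← ha2, norm_pow, Padic.norm_eq_zpow_neg_valuation ha0, ← zpow_natCast, ← zpow_mul]
      congr 1
      ring
    have := zpow_right_injective₀ p_pos one_lt_p.ne' hkey
    omega

lemma psi_continuous (ψ : AddChar ℚ_[p] ℂ)
    (htriv : ∀ x : ℚ_[p], ‖x‖ ≤ (p : ℝ)⁻¹ → ψ x = 1) : Continuous ψ := by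
  rw [continuous_iff_continuousAt]
  intro x
  have h : ∀ᶠ y in nhds x, ψ y = ψ x := by
    filter_upwards [Metric.ball_mem_nhds x (show (0:ℝ) < (p:ℝ)⁻¹ from inv_pos.mpr p_pos)] with y hy
    have h1 : ψ y = ψ x * ψ (y - x) := by
      rw [← ψ.map_add_eq_mul]
      congr 1
      ring
    rw [h1, htriv (y - x) (by
      rw [Metric.mem_ball, dist_eq_norm] at hy
      exact hy.le), mul_one]
  exact (Filter.EventuallyEq.continuousAt h)

lemma psi_norm_one (ψ : AddChar ℚ_[p] ℂ)
    (htriv : ∀ x : ℚ_[p], ‖x‖ ≤ (p : ℝ)⁻¹ → ψ x = 1) (z : ℚ_[p]) : ‖ψ z‖ = 1 := by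
  -- find n with ‖p^n • z‖ ≤ p⁻¹
  obtain ⟨n, hn⟩ : ∃ n : ℕ, ‖(p:ℚ_[p]) ^ n * z‖ ≤ (p:ℝ)⁻¹ := by
    rcases eq_or_ne z 0 with rfl | hz
    · exact ⟨0, by simpa using inv_nonneg.mpr p_pos.le⟩
    · have hlim : ∃ n : ℕ, ((p:ℝ)⁻¹) ^ n < (p:ℝ)⁻¹ / ‖z‖ := by
        apply exists_pow_lt_of_lt_one (div_pos (inv_pos.mpr p_pos) (norm_pos_iff.mpr hz))
        rw [inv_lt_one_iff₀]
        right
        exact one_lt_p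
      obtain ⟨n, hn⟩ := hlim
      refine ⟨n, ?_⟩
      rw [norm_mul, norm_pow, Padic.norm_p]
      calc ((p:ℝ)⁻¹) ^ n * ‖z‖ ≤ ((p:ℝ)⁻¹ / ‖z‖) * ‖z‖ := by
            apply mul_le_mul_of_nonneg_right hn.le (norm_nonneg z)
        _ = (p:ℝ)⁻¹ := div_mul_cancel₀ _ (norm_ne_zero_iff.mpr hz)
  have h1 : ψ ((p:ℚ_[p]) ^ n * z) = 1 := htriv _ hn
  have h2 : ((p:ℚ_[p]) ^ n * z) = (p ^ n : ℕ) • z := by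
    push_cast
    rw [nsmul_eq_mul]
    push_cast
    ring
  rw [h2] at h1
  rw [ψ.map_nsmul_eq_pow] at h1
  have h3 : ‖ψ z‖ ^ (p ^ n) = 1 := by
    rw [← norm_pow, h1, norm_one]
  have hnn : (0:ℝ) ≤ ‖ψ z‖ := norm_nonneg _
  have hpn : p ^ n ≠ 0 := pow_ne_zero n hfp.out.pos.ne'
  by_contra hne
  rcases lt_or_gt_of_ne hne with hlt | hgt
  · have := pow_lt_one₀ hnn hlt hpn
    rw [h3] at this
    exact lt_irrefl 1 this
  · have := one_lt_pow₀ hgt hpn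
    rw [h3] at this
    exact lt_irrefl 1 this

section Measures

variable [MeasurableSpace ℚ_[p]] [BorelSpace ℚ_[p]]

lemma zp_compact : IsCompact {x : ℚ_[p] | ‖x‖ ≤ 1} := by
  simpa [Metric.closedBall, dist_eq_norm] using isCompact_closedBall (0:ℚ_[p]) 1

lemma zp_measurable : MeasurableSet {x : ℚ_[p] | ‖x‖ ≤ 1} :=
  (zp_compact (p := p)).isClosed.measurableSet

lemma s_measurable : MeasurableSet {x : ℚ_[p] | ‖x‖ = 1} :=
  (isClosed_eq continuous_norm continuous_const).measurableSet

variable (μ : Measure ℚ_[p]) [μ.IsAddHaarMeasure]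

lemma zp_pos : 0 < μ {x : ℚ_[p] | ‖x‖ ≤ 1} := by
  have h : Metric.ball (0:ℚ_[p]) 1 ⊆ {x : ℚ_[p] | ‖x‖ ≤ 1} := by
    intro x hx; simp only [Metric.mem_ball, dist_zero_right] at hx; exact le_of_lt hx
  exact lt_of_lt_of_le (Metric.measure_ball_pos μ 0 one_pos) (measure_mono h)

lemma zp_lt_top : μ {x : ℚ_[p] | ‖x‖ ≤ 1} < ⊤ := zp_compact.measure_lt_top

lemma s_subset_zp : {x : ℚ_[p] | ‖x‖ = 1} ⊆ {x : ℚ_[p] | ‖x‖ ≤ 1} :=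
  fun x hx => le_of_eq hx

lemma s_pos : 0 < μ {x : ℚ_[p] | ‖x‖ = 1} := by
  have hopen : IsOpen {x : ℚ_[p] | ‖x - 1‖ < 1} :=
    isOpen_lt (by continuity) continuous_const
  have hsub : {x : ℚ_[p] | ‖x - 1‖ < 1} ⊆ {x : ℚ_[p] | ‖x‖ = 1} :=
    fun x hx => norm_eq_one_of_sub_lt hx
  refine lt_of_lt_of_le (hopen.measure_pos μ ⟨1, ?_⟩) (measure_mono hsub)
  simp

lemma s_lt_top : μ {x : ℚ_[p] | ‖x‖ = 1} < ⊤ :=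
  lt_of_le_of_lt (measure_mono s_subset_zp) (zp_lt_top μ)

noncomputable def mulEquivAdd (u : ℚ_[p]) (hu : u ≠ 0) : ℚ_[p] ≃+ ℚ_[p] where
  toFun x := u * x
  invFun x := u⁻¹ * x
  left_inv x := by field_simp
  right_inv x := by field_simp
  map_add' := mul_add u

lemma measurePreserving_unit_mul {u : ℚ_[p]} (hu : ‖u‖ = 1) :
    MeasurePreserving (fun x => u * x) μ μ := by
  have hu0 : u ≠ 0 := by intro h; rw [h] at hu; simp at hu
  constructor
  · exact (continuous_mul_left u).measurable
  · have H : (Measure.map (fun x => u * x) μ).IsAddHaarMeasure :=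
      AddEquiv.isAddHaarMeasure_map μ (mulEquivAdd u hu0)
        (continuous_mul_left u) (continuous_mul_left u⁻¹)
    have key := Measure.isAddLeftInvariant_eq_smul (Measure.map (fun x => u * x) μ) μ
    set c := Measure.addHaarScalarFactor (Measure.map (fun x => u * x) μ) μ
    have hmeas : Measure.map (fun x => u * x) μ {x : ℚ_[p] | ‖x‖ ≤ 1}
        = μ {x : ℚ_[p] | ‖x‖ ≤ 1} := by
      rw [Measure.map_apply (continuous_mul_left u).measurable zp_measurable]
      congr 1
      ext x
      simp only [Set.mem_preimage, Set.mem_setOf_eq, norm_mul, hu, one_mul]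
    have hc : (c : ENNReal) * μ {x : ℚ_[p] | ‖x‖ ≤ 1} = μ {x : ℚ_[p] | ‖x‖ ≤ 1} := by
      conv_rhs => rw [← hmeas, key]
      rw [Measure.smul_apply, ENNReal.smul_def, smul_eq_mul]
    have hc1 : (c : ENNReal) = 1 := by
      have h2 := congrArg (· * (μ {x : ℚ_[p] | ‖x‖ ≤ 1})⁻¹) hc
      simpa [mul_assoc, ENNReal.mul_inv_cancel (zp_pos μ).ne' (zp_lt_top μ).ne] using h2
    ext s hs
    rw [key]
    simp [Measure.smul_apply, ENNReal.smul_def, hc1]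

/-- The basic 1D vanishing: integral of `ψ (w t)` over `ℤ_p` vanishes when `‖w‖ ≥ 1`. -/
lemma vanish1D (ψ : AddChar ℚ_[p] ℂ)
    (hnt : ∃ z : ℚ_[p], ‖z‖ ≤ 1 ∧ ψ z ≠ 1)
    (w : ℚ_[p]) (hw : 1 ≤ ‖w‖) :
    ∫ t in {x : ℚ_[p] | ‖x‖ ≤ 1}, ψ (w * t) ∂μ = 0 := by
  obtain ⟨z, hz1, hz⟩ := hnt
  have hw0 : w ≠ 0 := by
    intro h; rw [h] at hw; simp at hw; linarith
  set t₀ := w⁻¹ * z with ht₀def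
  have ht₀ : ‖t₀‖ ≤ 1 := by
    rw [ht₀def, norm_mul, norm_inv]
    calc ‖w‖⁻¹ * ‖z‖ ≤ 1 * 1 := by
          apply mul_le_mul _ hz1 (norm_nonneg z) zero_le_one
          rw [← inv_one]
          exact inv_anti₀ one_pos hw
      _ = 1 := mul_one 1
  have hpre : (fun x : ℚ_[p] => x + t₀) ⁻¹' {x : ℚ_[p] | ‖x‖ ≤ 1}
      = {x : ℚ_[p] | ‖x‖ ≤ 1} := by
    ext x
    simp only [Set.mem_preimage, Set.mem_setOf_eq]
    constructor
    · intro h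
      have h2 : ‖x + t₀ + -t₀‖ ≤ max ‖x + t₀‖ ‖-t₀‖ := Padic.nonarchimedean _ _
      simp only [add_neg_cancel_right, norm_neg] at h2
      exact le_trans h2 (max_le h ht₀)
    · intro h
      exact le_trans (Padic.nonarchimedean x t₀) (max_le h ht₀)
  have key := (measurePreserving_add_right μ t₀).setIntegral_preimage_emb
      (Homeomorph.addRight t₀).measurableEmbedding
      (fun t => ψ (w * t)) {x : ℚ_[p] | ‖x‖ ≤ 1}
  rw [hpre] at key
  have expand : ∀ t : ℚ_[p], ψ (w * (t + t₀)) = ψ (w * t) * ψ z := by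
    intro t
    rw [mul_add, ψ.map_add_eq_mul]
    congr 2
    rw [ht₀def]
    field_simp
  simp only [expand] at key
  rw [integral_mul_const] at key
  have hzero : (∫ t in {x : ℚ_[p] | ‖x‖ ≤ 1}, ψ (w * t) ∂μ) * (ψ z - 1) = 0 := by
    rw [mul_sub, key, mul_one, sub_self]
  rcases mul_eq_zero.mp hzero with h | h
  · exact h
  · exact absurd (sub_eq_zero.mp h) hz

lemma integrable_bounded_psi {α : Type*} [MeasurableSpace α] (ν : Measure α)
    [IsFiniteMeasure ν] (f : α → ℂ) (hm : AEStronglyMeasurable f ν)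
    (hb : ∀ x, ‖f x‖ ≤ 1) : Integrable f ν :=
  ⟨hm, HasFiniteIntegral.of_bounded (C := 1) (Filter.Eventually.of_forall hb)⟩

/-- Kloosterman-type vanishing, first version : `‖y‖ < ‖x‖`, `p ≤ ‖x‖`. -/
lemma kl (ψ : AddChar ℚ_[p] ℂ)
    (htriv : ∀ x : ℚ_[p], ‖x‖ ≤ (p : ℝ)⁻¹ → ψ x = 1)
    (hnt : ∃ z : ℚ_[p], ‖z‖ ≤ 1 ∧ ψ z ≠ 1)
    (x y : ℚ_[p]) (hx : (p:ℝ) ≤ ‖x‖) (hyx : ‖y‖ < ‖x‖) :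
    ∫ u in {u : ℚ_[p] | ‖u‖ = 1}, ψ (u * x + u⁻¹ * y) ∂μ = 0 := by
  have hx1 : 1 < ‖x‖ := lt_of_lt_of_le one_lt_p hx
  have hx0 : x ≠ 0 := by
    intro h; rw [h] at hx1; simp at hx1; linarith
  set S := {u : ℚ_[p] | ‖u‖ = 1} with hSdef
  set K := ∫ u in S, ψ (u * x + u⁻¹ * y) ∂μ with hKdef
  -- small ratio
  have hratio : ‖y‖ * ‖x‖⁻¹ ≤ (p:ℝ)⁻¹ := by
    have h1 : ‖y * x⁻¹‖ < 1 := by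
      rw [norm_mul, norm_inv]
      calc ‖y‖ * ‖x‖⁻¹ < ‖x‖ * ‖x‖⁻¹ := by
            apply mul_lt_mul_of_pos_right hyx (inv_pos.mpr (lt_trans one_pos hx1))
        _ = 1 := mul_inv_cancel₀ (ne_of_gt (lt_trans one_pos hx1))
    have := norm_le_inv_p_of_lt_one h1
    rwa [norm_mul, norm_inv] at this
  -- Step A: for each `t ∈ ℤ_p`, twisting by `ψ (u t)` doesn't change K
  have step : ∀ t : ℚ_[p], ‖t‖ ≤ 1 →
      (∫ u in S, ψ (u * x + u⁻¹ * y) * ψ (u * t) ∂μ) = K := by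
    intro t ht
    set s := 1 + t * x⁻¹ with hsdef
    have hsmall : ‖t * x⁻¹‖ < 1 := by
      rw [norm_mul, norm_inv]
      calc ‖t‖ * ‖x‖⁻¹ ≤ 1 * ‖x‖⁻¹ := by
            apply mul_le_mul_of_nonneg_right ht (inv_nonneg.mpr (norm_nonneg x))
        _ = ‖x‖⁻¹ := one_mul _
        _ < 1 := by
            rw [inv_lt_one_iff₀]; right; exact hx1
    have hs1 : ‖s‖ = 1 := by
      rw [hsdef, Padic.add_eq_max_of_ne (by rw [norm_one]; exact (ne_of_lt hsmall).symm),
        norm_one]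
      exact max_eq_left hsmall.le
    have hs0 : s ≠ 0 := by intro h; rw [h] at hs1; simp at hs1
    have hpre : (fun u : ℚ_[p] => s * u) ⁻¹' S = S := by
      ext u
      simp only [hSdef, Set.mem_preimage, Set.mem_setOf_eq, norm_mul, hs1, one_mul]
    have key := (measurePreserving_unit_mul μ hs1).setIntegral_preimage_emb
        (Homeomorph.mulLeft₀ s hs0).measurableEmbedding
        (fun u => ψ (u * x + u⁻¹ * y)) S
    rw [hpre] at key
    rw [hKdef, ← key]
    apply setIntegral_congr_fun s_measurable
    intro u hu
    have hu1 : ‖u‖ = 1 := hu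
    have hu0 : u ≠ 0 := by intro h; rw [h] at hu1; simp at hu1
    have hsx : s * x = x + t := by
      rw [hsdef, add_mul, one_mul, mul_assoc, inv_mul_cancel₀ hx0, mul_one]
    have hxt : x + t ≠ 0 := by
      rw [← hsx]; exact mul_ne_zero hs0 hx0
    have harg : (s * u) * x + (s * u)⁻¹ * y
        = (u * x + u⁻¹ * y) + u * t + u⁻¹ * (s⁻¹ - 1) * y := by
      have hsval : s = (x + t) * x⁻¹ := by
        rw [hsdef]; field_simp
      rw [hsval]
      field_simp
      ring
    have hδ : ψ (u⁻¹ * (s⁻¹ - 1) * y) = 1 := by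
      apply htriv
      have hs' : s⁻¹ - 1 = -(t * x⁻¹) * s⁻¹ := by
        have h1 : (s⁻¹ - 1) * s = -(t * x⁻¹) * s⁻¹ * s := by
          rw [sub_mul, inv_mul_cancel₀ hs0, one_mul, mul_assoc, inv_mul_cancel₀ hs0, mul_one,
            hsdef]
          ring
        exact mul_right_cancel₀ hs0 h1
      rw [norm_mul, norm_mul, norm_inv, hu1, inv_one, one_mul, hs', norm_mul, norm_neg,
        norm_inv, hs1, inv_one, mul_one, norm_mul, norm_inv]
      calc ‖t‖ * ‖x‖⁻¹ * ‖y‖ ≤ 1 * ‖x‖⁻¹ * ‖y‖ := by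
            apply mul_le_mul_of_nonneg_right _ (norm_nonneg y)
            apply mul_le_mul_of_nonneg_right ht (inv_nonneg.mpr (norm_nonneg x))
        _ = ‖y‖ * ‖x‖⁻¹ := by ring
        _ ≤ (p:ℝ)⁻¹ := hratio
    show ψ (u * x + u⁻¹ * y) * ψ (u * t) = ψ ((s * u) * x + (s * u)⁻¹ * y)
    calc ψ (u * x + u⁻¹ * y) * ψ (u * t)
        = ψ (u * x + u⁻¹ * y) * ψ (u * t) * ψ (u⁻¹ * (s⁻¹ - 1) * y) := by
          rw [hδ, mul_one]
      _ = ψ ((u * x + u⁻¹ * y) + u * t + u⁻¹ * (s⁻¹ - 1) * y) := by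
          rw [ψ.map_add_eq_mul (u * x + u⁻¹ * y + u * t) (u⁻¹ * (s⁻¹ - 1) * y),
            ψ.map_add_eq_mul (u * x + u⁻¹ * y) (u * t)]
      _ = ψ ((s * u) * x + (s * u)⁻¹ * y) := by rw [← harg]
  -- Step B: average over t ∈ ℤ_p
  haveI hfin1 : IsFiniteMeasure (μ.restrict {x : ℚ_[p] | ‖x‖ ≤ 1}) :=
    ⟨by rw [Measure.restrict_apply_univ]; exact zp_lt_top μ⟩
  haveI hfin2 : IsFiniteMeasure (μ.restrict S) :=
    ⟨by rw [Measure.restrict_apply_univ]; exact s_lt_top μ⟩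
  have hcont : Continuous ψ := psi_continuous ψ htriv
  have hInt : Integrable (Function.uncurry fun (t u : ℚ_[p]) =>
      ψ (u * x + u⁻¹ * y) * ψ (u * t))
      ((μ.restrict {x : ℚ_[p] | ‖x‖ ≤ 1}).prod (μ.restrict S)) := by
    apply integrable_bounded_psi
    · apply Measurable.aestronglyMeasurable
      apply Measurable.mul
      · exact (hcont.measurable).comp
          (((measurable_snd.mul_const x).add (measurable_snd.inv.mul_const y)))
      · exact (hcont.measurable).comp (measurable_snd.mul measurable_fst)
    · intro q
      rw [Function.uncurry, norm_mul, psi_norm_one ψ htriv, psi_norm_one ψ htriv, mul_one]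
  have main : (μ {x : ℚ_[p] | ‖x‖ ≤ 1}).toReal • K = 0 := by
    calc (μ {x : ℚ_[p] | ‖x‖ ≤ 1}).toReal • K
        = ∫ _t in {x : ℚ_[p] | ‖x‖ ≤ 1}, K ∂μ := (setIntegral_const K).symm
      _ = ∫ t in {x : ℚ_[p] | ‖x‖ ≤ 1},
            (∫ u in S, ψ (u * x + u⁻¹ * y) * ψ (u * t) ∂μ) ∂μ := by
          apply setIntegral_congr_fun zp_measurable
          intro t ht
          exact (step t ht).symm
      _ = ∫ u in S, (∫ t in {x : ℚ_[p] | ‖x‖ ≤ 1},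
            ψ (u * x + u⁻¹ * y) * ψ (u * t) ∂μ) ∂μ := integral_integral_swap hInt
      _ = ∫ u in S, (0:ℂ) ∂μ := by
          apply setIntegral_congr_fun s_measurable
          intro u hu
          have hu1 : ‖u‖ = 1 := hu
          show (∫ t in {x : ℚ_[p] | ‖x‖ ≤ 1}, ψ (u * x + u⁻¹ * y) * ψ (u * t) ∂μ) = 0
          rw [integral_const_mul, vanish1D μ ψ hnt u (le_of_eq hu1.symm), mul_zero]
      _ = 0 := integral_zero _ _
  have hpos : 0 < (μ {x : ℚ_[p] | ‖x‖ ≤ 1}).toReal :=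
    ENNReal.toReal_pos (zp_pos μ).ne' (zp_lt_top μ).ne
  exact (smul_eq_zero.mp main).resolve_left (ne_of_gt hpos)

/-- Kloosterman-type vanishing, second version : `‖x‖ < ‖y‖`, `p ≤ ‖y‖`. -/
lemma kl' (ψ : AddChar ℚ_[p] ℂ)
    (htriv : ∀ x : ℚ_[p], ‖x‖ ≤ (p : ℝ)⁻¹ → ψ x = 1)
    (hnt : ∃ z : ℚ_[p], ‖z‖ ≤ 1 ∧ ψ z ≠ 1)
    (x y : ℚ_[p]) (hy : (p:ℝ) ≤ ‖y‖) (hxy : ‖x‖ < ‖y‖) :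
    ∫ u in {u : ℚ_[p] | ‖u‖ = 1}, ψ (u * x + u⁻¹ * y) ∂μ = 0 := by
  have hy1 : 1 < ‖y‖ := lt_of_lt_of_le one_lt_p hy
  have hy0 : y ≠ 0 := by
    intro h; rw [h] at hy1; simp at hy1; linarith
  set S := {u : ℚ_[p] | ‖u‖ = 1} with hSdef
  set K := ∫ u in S, ψ (u * x + u⁻¹ * y) ∂μ with hKdef
  have hratio : ‖x‖ * ‖y‖⁻¹ ≤ (p:ℝ)⁻¹ := by
    have h1 : ‖x * y⁻¹‖ < 1 := by
      rw [norm_mul, norm_inv]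
      calc ‖x‖ * ‖y‖⁻¹ < ‖y‖ * ‖y‖⁻¹ := by
            apply mul_lt_mul_of_pos_right hxy (inv_pos.mpr (lt_trans one_pos hy1))
        _ = 1 := mul_inv_cancel₀ (ne_of_gt (lt_trans one_pos hy1))
    have := norm_le_inv_p_of_lt_one h1
    rwa [norm_mul, norm_inv] at this
  have step : ∀ t : ℚ_[p], ‖t‖ ≤ 1 →
      (∫ u in S, ψ (u * x + u⁻¹ * y) * ψ (u⁻¹ * t) ∂μ) = K := by
    intro t ht
    set σ := 1 + t * y⁻¹ with hσdef
    have hsmall : ‖t * y⁻¹‖ < 1 := by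
      rw [norm_mul, norm_inv]
      calc ‖t‖ * ‖y‖⁻¹ ≤ 1 * ‖y‖⁻¹ := by
            apply mul_le_mul_of_nonneg_right ht (inv_nonneg.mpr (norm_nonneg y))
        _ = ‖y‖⁻¹ := one_mul _
        _ < 1 := by
            rw [inv_lt_one_iff₀]; right; exact hy1
    have hσ1 : ‖σ‖ = 1 := by
      rw [hσdef, Padic.add_eq_max_of_ne (by rw [norm_one]; exact (ne_of_lt hsmall).symm),
        norm_one]
      exact max_eq_left hsmall.le
    have hσ0 : σ ≠ 0 := by intro h; rw [h] at hσ1; simp at hσ1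
    set s := σ⁻¹ with hsdef
    have hs1 : ‖s‖ = 1 := by rw [hsdef, norm_inv, hσ1, inv_one]
    have hs0 : s ≠ 0 := inv_ne_zero hσ0
    have hσy : σ * y = y + t := by
      rw [hσdef, add_mul, one_mul, mul_assoc, inv_mul_cancel₀ hy0, mul_one]
    have hpre : (fun u : ℚ_[p] => s * u) ⁻¹' S = S := by
      ext u
      simp only [hSdef, Set.mem_preimage, Set.mem_setOf_eq, norm_mul, hs1, one_mul]
    have key := (measurePreserving_unit_mul μ hs1).setIntegral_preimage_emb
        (Homeomorph.mulLeft₀ s hs0).measurableEmbedding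
        (fun u => ψ (u * x + u⁻¹ * y)) S
    rw [hpre] at key
    rw [hKdef, ← key]
    apply setIntegral_congr_fun s_measurable
    intro u hu
    have hu1 : ‖u‖ = 1 := hu
    have hu0 : u ≠ 0 := by intro h; rw [h] at hu1; simp at hu1
    have h2 : (s * u)⁻¹ * y = u⁻¹ * y + u⁻¹ * t := by
      calc (s * u)⁻¹ * y = s⁻¹ * u⁻¹ * y := by rw [mul_inv, mul_comm s⁻¹ u⁻¹]
        _ = u⁻¹ * (σ * y) := by rw [hsdef, inv_inv]; ring
        _ = u⁻¹ * (y + t) := by rw [hσy]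
        _ = u⁻¹ * y + u⁻¹ * t := by ring
    have harg : (s * u) * x + (s * u)⁻¹ * y
        = (u * x + u⁻¹ * y) + u⁻¹ * t + u * (s - 1) * x := by
      rw [h2]; ring
    have hδ : ψ (u * (s - 1) * x) = 1 := by
      apply htriv
      have hs' : s - 1 = -(t * y⁻¹) * s := by
        have h1 : (s - 1) * σ = -(t * y⁻¹) * s * σ := by
          rw [sub_mul, hsdef, inv_mul_cancel₀ hσ0, mul_assoc, inv_mul_cancel₀ hσ0, mul_one,
            hσdef]
          ring
        exact mul_right_cancel₀ hσ0 h1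
      have hnorm : ‖u * (s - 1) * x‖ = ‖t‖ * ‖y‖⁻¹ * ‖x‖ := by
        rw [hs']
        simp only [norm_mul, norm_neg, norm_inv, hu1, hs1]
        ring
      rw [hnorm]
      calc ‖t‖ * ‖y‖⁻¹ * ‖x‖ ≤ 1 * ‖y‖⁻¹ * ‖x‖ := by
            apply mul_le_mul_of_nonneg_right _ (norm_nonneg x)
            apply mul_le_mul_of_nonneg_right ht (inv_nonneg.mpr (norm_nonneg y))
        _ = ‖x‖ * ‖y‖⁻¹ := by ring
        _ ≤ (p:ℝ)⁻¹ := hratio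
    show ψ (u * x + u⁻¹ * y) * ψ (u⁻¹ * t) = ψ ((s * u) * x + (s * u)⁻¹ * y)
    calc ψ (u * x + u⁻¹ * y) * ψ (u⁻¹ * t)
        = ψ (u * x + u⁻¹ * y) * ψ (u⁻¹ * t) * ψ (u * (s - 1) * x) := by
          rw [hδ, mul_one]
      _ = ψ ((u * x + u⁻¹ * y) + u⁻¹ * t + u * (s - 1) * x) := by
          rw [ψ.map_add_eq_mul (u * x + u⁻¹ * y + u⁻¹ * t) (u * (s - 1) * x),
            ψ.map_add_eq_mul (u * x + u⁻¹ * y) (u⁻¹ * t)]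
      _ = ψ ((s * u) * x + (s * u)⁻¹ * y) := by rw [← harg]
  haveI hfin1 : IsFiniteMeasure (μ.restrict {x : ℚ_[p] | ‖x‖ ≤ 1}) :=
    ⟨by rw [Measure.restrict_apply_univ]; exact zp_lt_top μ⟩
  haveI hfin2 : IsFiniteMeasure (μ.restrict S) :=
    ⟨by rw [Measure.restrict_apply_univ]; exact s_lt_top μ⟩
  have hcont : Continuous ψ := psi_continuous ψ htriv
  have hInt : Integrable (Function.uncurry fun (t u : ℚ_[p]) =>
      ψ (u * x + u⁻¹ * y) * ψ (u⁻¹ * t))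
      ((μ.restrict {x : ℚ_[p] | ‖x‖ ≤ 1}).prod (μ.restrict S)) := by
    apply integrable_bounded_psi
    · apply Measurable.aestronglyMeasurable
      apply Measurable.mul
      · exact (hcont.measurable).comp
          (((measurable_snd.mul_const x).add (measurable_snd.inv.mul_const y)))
      · exact (hcont.measurable).comp (measurable_snd.inv.mul measurable_fst)
    · intro q
      rw [Function.uncurry, norm_mul, psi_norm_one ψ htriv, psi_norm_one ψ htriv, mul_one]
  have main : (μ {x : ℚ_[p] | ‖x‖ ≤ 1}).toReal • K = 0 := by
    calc (μ {x : ℚ_[p] | ‖x‖ ≤ 1}).toReal • K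
        = ∫ _t in {x : ℚ_[p] | ‖x‖ ≤ 1}, K ∂μ := (setIntegral_const K).symm
      _ = ∫ t in {x : ℚ_[p] | ‖x‖ ≤ 1},
            (∫ u in S, ψ (u * x + u⁻¹ * y) * ψ (u⁻¹ * t) ∂μ) ∂μ := by
          apply setIntegral_congr_fun zp_measurable
          intro t ht
          exact (step t ht).symm
      _ = ∫ u in S, (∫ t in {x : ℚ_[p] | ‖x‖ ≤ 1},
            ψ (u * x + u⁻¹ * y) * ψ (u⁻¹ * t) ∂μ) ∂μ := integral_integral_swap hInt
      _ = ∫ u in S, (0:ℂ) ∂μ := by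
          apply setIntegral_congr_fun s_measurable
          intro u hu
          have hu1 : ‖u‖ = 1 := hu
          show (∫ t in {x : ℚ_[p] | ‖x‖ ≤ 1}, ψ (u * x + u⁻¹ * y) * ψ (u⁻¹ * t) ∂μ) = 0
          rw [integral_const_mul, vanish1D μ ψ hnt u⁻¹ (by rw [norm_inv, hu1, inv_one]),
            mul_zero]
      _ = 0 := integral_zero _ _
  have hpos : 0 < (μ {x : ℚ_[p] | ‖x‖ ≤ 1}).toReal :=
    ENNReal.toReal_pos (zp_pos μ).ne' (zp_lt_top μ).ne
  exact (smul_eq_zero.mp main).resolve_left (ne_of_gt hpos)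

end Measures

end PadicVanishAux

open PadicVanishAux in
/-- For `p` an odd prime, `ψ` an additive character of `ℚ_p` with conductor `pℤ_p`
(trivial on `pℤ_p`, nontrivial on `ℤ_p`), `μ` an additive Haar measure on `ℚ_p`, and
`B, C ∈ ℚ_p^×` with `v(C) = v(B) + 1` and `v(C) ≤ 0`, there exists `L` such that for
all `ℓ ≥ L` the integral of `ψ(b·C + c·B)` over
`T_ℓ = {(a,b,c) : a,b,c ∈ p^{-ℓ}ℤ_p, a² + b·c ∈ ℤ_p}` vanishes. -/
theorem integral_vanishes_valuation_plus_one
    (p : ℕ) [Fact p.Prime] (hp : Odd p)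
    [MeasurableSpace ℚ_[p]] [BorelSpace ℚ_[p]]
    (ψ : AddChar ℚ_[p] ℂ)
    (hψ_triv : ∀ x : ℚ_[p], ‖x‖ ≤ (p : ℝ)⁻¹ → ψ x = 1)
    (hψ_nontriv : ∃ x : ℚ_[p], ‖x‖ ≤ 1 ∧ ψ x ≠ 1)
    (μ : Measure ℚ_[p]) [μ.IsAddHaarMeasure]
    (B C : ℚ_[p]) (hB : B ≠ 0) (hC : C ≠ 0)
    (hBC : C.valuation = B.valuation + 1) (hC0 : C.valuation ≤ 0) :
    ∃ L : ℕ, ∀ ℓ : ℕ, L ≤ ℓ →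
      (∫ x in {x : ℚ_[p] × ℚ_[p] × ℚ_[p] |
          ‖x.1‖ ≤ (p : ℝ) ^ ℓ ∧ ‖x.2.1‖ ≤ (p : ℝ) ^ ℓ ∧ ‖x.2.2‖ ≤ (p : ℝ) ^ ℓ ∧
            ‖x.1 ^ 2 + x.2.1 * x.2.2‖ ≤ 1},
        ψ (x.2.1 * C + x.2.2 * B) ∂(μ.prod (μ.prod μ))) = 0 := by
  refine ⟨0, fun ℓ _ => ?_⟩
  have hp1 : (1:ℝ) < p := one_lt_p
  have hp0 : (p:ℝ) ≠ 0 := ne_of_gt p_pos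
  -- norm facts for B, C
  have hC1 : 1 ≤ ‖C‖ := by
    rw [Padic.norm_eq_zpow_neg_valuation hC]
    calc (1:ℝ) = (p:ℝ) ^ (0:ℤ) := by simp
      _ ≤ (p:ℝ) ^ (-C.valuation) := zpow_le_zpow_right₀ hp1.le (by omega)
  have hBnorm : ‖B‖ = p * ‖C‖ := by
    rw [Padic.norm_eq_zpow_neg_valuation hB, Padic.norm_eq_zpow_neg_valuation hC, hBC]
    rw [show -(B.valuation + 1) = -B.valuation + (-1) by ring, zpow_add₀ hp0]
    rw [zpow_neg_one]
    field_simp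
  have hB1 : 1 ≤ ‖B‖ := by
    rw [hBnorm]
    calc (1:ℝ) = 1 * 1 := (one_mul 1).symm
      _ ≤ (p:ℝ) * ‖C‖ := mul_le_mul hp1.le hC1 zero_le_one p_pos.le
  have hcont : Continuous ψ := psi_continuous ψ hψ_triv
  set μ3 := μ.prod (μ.prod μ) with hμ3
  set T : Set (ℚ_[p] × ℚ_[p] × ℚ_[p]) := {x : ℚ_[p] × ℚ_[p] × ℚ_[p] |
      ‖x.1‖ ≤ (p : ℝ) ^ ℓ ∧ ‖x.2.1‖ ≤ (p : ℝ) ^ ℓ ∧ ‖x.2.2‖ ≤ (p : ℝ) ^ ℓ ∧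
        ‖x.1 ^ 2 + x.2.1 * x.2.2‖ ≤ 1} with hTdef
  set T₀ : Set (ℚ_[p] × ℚ_[p] × ℚ_[p]) := {z : ℚ_[p] × ℚ_[p] × ℚ_[p] |
      ‖z.1‖ ≤ 1 ∧ ‖z.2.1‖ ≤ 1 ∧ ‖z.2.2‖ ≤ 1} with hT₀def
  set S : Set ℚ_[p] := {u : ℚ_[p] | ‖u‖ = 1} with hSdef
  set Zp : Set ℚ_[p] := {x : ℚ_[p] | ‖x‖ ≤ 1} with hZpdef
  -- measurability
  have hT : MeasurableSet T := by
    have h1 : Measurable fun z : ℚ_[p] × ℚ_[p] × ℚ_[p] => ‖z.1‖ :=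
      continuous_fst.norm.measurable
    have h2 : Measurable fun z : ℚ_[p] × ℚ_[p] × ℚ_[p] => ‖z.2.1‖ :=
      (continuous_snd.fst).norm.measurable
    have h3 : Measurable fun z : ℚ_[p] × ℚ_[p] × ℚ_[p] => ‖z.2.2‖ :=
      (continuous_snd.snd).norm.measurable
    have h4 : Measurable fun z : ℚ_[p] × ℚ_[p] × ℚ_[p] => ‖z.1 ^ 2 + z.2.1 * z.2.2‖ :=
      (((continuous_fst.pow 2).add ((continuous_snd.fst).mul (continuous_snd.snd))).norm
        ).measurable
    exact MeasurableSet.inter (measurableSet_le h1 measurable_const)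
      (MeasurableSet.inter (measurableSet_le h2 measurable_const)
      (MeasurableSet.inter (measurableSet_le h3 measurable_const)
        (measurableSet_le h4 measurable_const)))
  have hT₀ : MeasurableSet T₀ := by
    have h1 : Measurable fun z : ℚ_[p] × ℚ_[p] × ℚ_[p] => ‖z.1‖ :=
      continuous_fst.norm.measurable
    have h2 : Measurable fun z : ℚ_[p] × ℚ_[p] × ℚ_[p] => ‖z.2.1‖ :=
      (continuous_snd.fst).norm.measurable
    have h3 : Measurable fun z : ℚ_[p] × ℚ_[p] × ℚ_[p] => ‖z.2.2‖ :=
      (continuous_snd.snd).norm.measurable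
    exact MeasurableSet.inter (measurableSet_le h1 measurable_const)
      (MeasurableSet.inter (measurableSet_le h2 measurable_const)
        (measurableSet_le h3 measurable_const))
  have honep : 1 ≤ (p:ℝ) ^ ℓ := one_le_pow₀ hp1.le
  have hT₀sub : T₀ ⊆ T := by
    rintro ⟨a, b, c⟩ ⟨h1, h2, h3⟩
    refine ⟨le_trans h1 honep, le_trans h2 honep, le_trans h3 honep, ?_⟩
    refine le_trans (Padic.nonarchimedean _ _) (max_le ?_ ?_)
    · rw [norm_pow]
      exact pow_le_one₀ (norm_nonneg a) h1
    · rw [norm_mul]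
      exact mul_le_one₀ h2 (norm_nonneg c) h3
  have hT₀eq : T₀ = Zp ×ˢ (Zp ×ˢ Zp) := by
    ext ⟨a, b, c⟩
    simp [hT₀def, hZpdef, Set.mem_prod]
  -- finiteness
  have hBlcomp : IsCompact {x : ℚ_[p] | ‖x‖ ≤ (p:ℝ) ^ ℓ} := by
    simpa [Metric.closedBall, dist_eq_norm] using
      isCompact_closedBall (0:ℚ_[p]) ((p:ℝ) ^ ℓ)
  have hμT : μ3 T < ⊤ := by
    have hsub : T ⊆ {x : ℚ_[p] | ‖x‖ ≤ (p:ℝ) ^ ℓ} ×ˢ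
        ({x : ℚ_[p] | ‖x‖ ≤ (p:ℝ) ^ ℓ} ×ˢ {x : ℚ_[p] | ‖x‖ ≤ (p:ℝ) ^ ℓ}) := by
      rintro ⟨a, b, c⟩ ⟨h1, h2, h3, _⟩
      exact ⟨h1, h2, h3⟩
    refine lt_of_le_of_lt (measure_mono hsub) ?_
    rw [hμ3, Measure.prod_prod, Measure.prod_prod]
    have hfin := hBlcomp.measure_lt_top (μ := μ)
    exact ENNReal.mul_lt_top hfin (ENNReal.mul_lt_top hfin hfin)
  haveI hfinT : IsFiniteMeasure (μ3.restrict T) :=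
    ⟨by rw [Measure.restrict_apply_univ]; exact hμT⟩
  haveI hfinT₀ : IsFiniteMeasure (μ3.restrict T₀) :=
    ⟨by rw [Measure.restrict_apply_univ];
        exact lt_of_le_of_lt (measure_mono hT₀sub) hμT⟩
  haveI hfinS : IsFiniteMeasure (μ.restrict S) :=
    ⟨by rw [Measure.restrict_apply_univ]; exact s_lt_top μ⟩
  haveI hfinZp : IsFiniteMeasure (μ.restrict Zp) :=
    ⟨by rw [Measure.restrict_apply_univ]; exact zp_lt_top μ⟩
  -- the integrand family
  set F : ℚ_[p] → ℚ_[p] × ℚ_[p] × ℚ_[p] → ℂ :=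
    fun u z => ψ (u * (z.2.1 * C) + u⁻¹ * (z.2.2 * B)) with hFdef
  set I : ℂ := ∫ z in T, ψ (z.2.1 * C + z.2.2 * B) ∂μ3 with hIdef
  show I = 0
  -- Step 1 : substitution (a,b,c) ↦ (a, u b, u⁻¹ c)
  have step1 : ∀ u ∈ S, (∫ z in T, F u z ∂μ3) = I := by
    intro u hu
    have hu1 : ‖u‖ = 1 := hu
    have hu0 : u ≠ 0 := by intro h; rw [h] at hu1; simp at hu1
    have huinv : ‖u⁻¹‖ = 1 := by rw [norm_inv, hu1, inv_one]
    set φ : ℚ_[p] × ℚ_[p] × ℚ_[p] → ℚ_[p] × ℚ_[p] × ℚ_[p] :=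
      Prod.map (id : ℚ_[p] → ℚ_[p])
        (Prod.map (fun b => u * b) (fun c => u⁻¹ * c)) with hφdef
    have hmp : MeasurePreserving φ μ3 μ3 :=
      (MeasurePreserving.id μ).prod
        ((measurePreserving_unit_mul μ hu1).prod (measurePreserving_unit_mul μ huinv))
    have hemb : MeasurableEmbedding φ :=
      MeasurableEmbedding.id.prodMap
        (((Homeomorph.mulLeft₀ u hu0).measurableEmbedding).prodMap
          ((Homeomorph.mulLeft₀ u⁻¹ (inv_ne_zero hu0)).measurableEmbedding))
    have hmn : ∀ w : ℚ_[p], ‖u * w‖ = ‖w‖ := fun w => by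
      rw [norm_mul, hu1, one_mul]
    have hmn' : ∀ w : ℚ_[p], ‖u⁻¹ * w‖ = ‖w‖ := fun w => by
      rw [norm_mul, huinv, one_mul]
    have hbc : ∀ b c : ℚ_[p], u * b * (u⁻¹ * c) = b * c := fun b c => by
      field_simp
    have hpre : φ ⁻¹' T = T := by
      ext ⟨a, b, c⟩
      simp only [hTdef, hφdef, Set.mem_preimage, Prod.map, id, Set.mem_setOf_eq,
        hmn, hmn', hbc]
    have key := hmp.setIntegral_preimage_emb hemb
      (fun z => ψ (z.2.1 * C + z.2.2 * B)) T
    rw [hpre] at key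
    rw [hIdef, ← key]
    apply setIntegral_congr_fun hT
    intro z _
    show F u z = ψ ((φ z).2.1 * C + (φ z).2.2 * B)
    rw [hFdef, hφdef]
    simp only [Prod.map, id]
    congr 1
    ring
  -- integrability on S × T and S × T₀
  have hmeasF : Measurable (Function.uncurry F) := by
    apply hcont.measurable.comp
    exact ((measurable_fst.mul ((measurable_snd.snd.fst).mul_const C)).add
      ((measurable_fst.inv).mul ((measurable_snd.snd.snd).mul_const B)))
  have hbd : ∀ q : ℚ_[p] × (ℚ_[p] × ℚ_[p] × ℚ_[p]), ‖Function.uncurry F q‖ ≤ 1 := by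
    intro q
    rw [Function.uncurry]
    exact le_of_eq (psi_norm_one ψ hψ_triv _)
  have hIntT : Integrable (Function.uncurry F) ((μ.restrict S).prod (μ3.restrict T)) :=
    integrable_bounded_psi _ _ hmeasF.aestronglyMeasurable hbd
  have hIntT₀ : Integrable (Function.uncurry F) ((μ.restrict S).prod (μ3.restrict T₀)) :=
    integrable_bounded_psi _ _ hmeasF.aestronglyMeasurable hbd
  -- pointwise vanishing off T₀
  have hptwise : ∀ z ∈ T, (∫ u in S, F u z ∂μ) = T₀.indicator (fun z => ∫ u in S, F u z ∂μ) z := by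
    intro z hz
    by_cases hz0 : z ∈ T₀
    · rw [Set.indicator_of_mem hz0]
    · rw [Set.indicator_of_notMem hz0]
      obtain ⟨ha, hb, hc, habc⟩ := hz
      have hbcgt : ¬(‖z.2.1‖ ≤ 1 ∧ ‖z.2.2‖ ≤ 1) := by
        rintro ⟨h1, h2⟩
        apply hz0
        refine ⟨?_, h1, h2⟩
        have ha2 : ‖z.1 ^ 2‖ ≤ 1 := by
          have heq : z.1 ^ 2 = (z.1 ^ 2 + z.2.1 * z.2.2) + -(z.2.1 * z.2.2) := by ring
          rw [heq]
          refine le_trans (Padic.nonarchimedean _ _) (max_le habc ?_)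
          rw [norm_neg, norm_mul]
          exact mul_le_one₀ h1 (norm_nonneg _) h2
        rw [norm_pow] at ha2
        nlinarith [norm_nonneg z.1]
      set x := z.2.1 * C with hxdef
      set y := z.2.2 * B with hydef
      have hsmallcase : ‖x‖ ≤ 1 → ‖y‖ ≤ 1 → False := by
        intro hx1 hy1
        apply hbcgt
        constructor
        · calc ‖z.2.1‖ ≤ ‖z.2.1‖ * ‖C‖ := le_mul_of_one_le_right (norm_nonneg _) hC1
            _ = ‖x‖ := (norm_mul _ _).symm
            _ ≤ 1 := hx1
        · calc ‖z.2.2‖ ≤ ‖z.2.2‖ * ‖B‖ := le_mul_of_one_le_right (norm_nonneg _) hB1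
            _ = ‖y‖ := (norm_mul _ _).symm
            _ ≤ 1 := hy1
      by_cases h1 : ‖y‖ < ‖x‖ ∧ (p:ℝ) ≤ ‖x‖
      · exact kl μ ψ hψ_triv hψ_nontriv x y h1.2 h1.1
      by_cases h2 : ‖x‖ < ‖y‖ ∧ (p:ℝ) ≤ ‖y‖
      · exact kl' μ ψ hψ_triv hψ_nontriv x y h2.2 h2.1
      exfalso
      push_neg at h1 h2
      rcases lt_trichotomy ‖x‖ ‖y‖ with hlt | heq | hgt
      · have hy1 : ‖y‖ ≤ 1 := norm_le_one_of_lt_p (h2 hlt)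
        exact hsmallcase (le_trans hlt.le hy1) hy1
      · by_cases hxle : ‖x‖ ≤ 1
        · exact hsmallcase hxle (heq ▸ hxle)
        · push_neg at hxle
          have hb0 : z.2.1 ≠ 0 := by
            intro h
            rw [hxdef, h, zero_mul, norm_zero] at hxle
            linarith
          have hc0 : z.2.2 ≠ 0 := by
            intro h
            rw [hydef, h, zero_mul, norm_zero] at heq
            linarith
          have hbn : ‖z.2.1‖ = p * ‖z.2.2‖ := by
            have h3 : ‖z.2.1‖ * ‖C‖ = (‖z.2.2‖ * (p:ℝ)) * ‖C‖ := by
              rw [← norm_mul, ← hxdef, heq, hydef, norm_mul, hBnorm]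
              ring
            have hCne : ‖C‖ ≠ 0 := by linarith
            have h4 := mul_right_cancel₀ hCne h3
            rw [h4]; ring
          exact no_parity habc hb0 hc0 hbn hbcgt
      · have hx1 : ‖x‖ ≤ 1 := norm_le_one_of_lt_p (h1 hgt)
        exact hsmallcase hx1 (le_trans hgt.le hx1)
  -- inner integral over T₀ vanishes for every u ∈ S
  have inner0 : ∀ u ∈ S, (∫ z in T₀, F u z ∂μ3) = 0 := by
    intro u hu
    have hu1 : ‖u‖ = 1 := hu
    have hres : μ3.restrict T₀
        = (μ.restrict Zp).prod ((μ.restrict Zp).prod (μ.restrict Zp)) := by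
      rw [hT₀eq, hμ3, ← Measure.prod_restrict, ← Measure.prod_restrict]
    have hF : ∀ z : ℚ_[p] × ℚ_[p] × ℚ_[p], F u z
        = (fun _ : ℚ_[p] => (1:ℂ)) z.1 *
          ((fun w : ℚ_[p] × ℚ_[p] => ψ (u * (w.1 * C)) * ψ (u⁻¹ * (w.2 * B))) z.2) := by
      intro z
      rw [hFdef, one_mul]
      exact ψ.map_add_eq_mul _ _
    calc (∫ z in T₀, F u z ∂μ3)
        = ∫ z, F u z ∂((μ.restrict Zp).prod ((μ.restrict Zp).prod (μ.restrict Zp))) := by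
          rw [← hres]
      _ = ∫ z : ℚ_[p] × (ℚ_[p] × ℚ_[p]), (fun _ : ℚ_[p] => (1:ℂ)) z.1 *
            ((fun w : ℚ_[p] × ℚ_[p] => ψ (u * (w.1 * C)) * ψ (u⁻¹ * (w.2 * B))) z.2)
              ∂((μ.restrict Zp).prod ((μ.restrict Zp).prod (μ.restrict Zp))) := by
          apply integral_congr_ae
          exact Filter.EventuallyEq.of_eq (funext hF)
      _ = (∫ _ : ℚ_[p], (1:ℂ) ∂(μ.restrict Zp)) *
            ∫ w : ℚ_[p] × ℚ_[p], ψ (u * (w.1 * C)) * ψ (u⁻¹ * (w.2 * B))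
              ∂((μ.restrict Zp).prod (μ.restrict Zp)) :=
          integral_prod_mul (fun _ : ℚ_[p] => (1:ℂ))
            (fun w : ℚ_[p] × ℚ_[p] => ψ (u * (w.1 * C)) * ψ (u⁻¹ * (w.2 * B)))
      _ = (∫ _ : ℚ_[p], (1:ℂ) ∂(μ.restrict Zp)) *
            ((∫ b in Zp, ψ (u * (b * C)) ∂μ) * ∫ c in Zp, ψ (u⁻¹ * (c * B)) ∂μ) := by
          rw [integral_prod_mul (fun b : ℚ_[p] => ψ (u * (b * C)))
            (fun c : ℚ_[p] => ψ (u⁻¹ * (c * B)))]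
      _ = 0 := by
          have hbint : (∫ b in Zp, ψ (u * (b * C)) ∂μ) = 0 := by
            have harg : ∀ b : ℚ_[p], ψ (u * (b * C)) = ψ ((u * C) * b) := by
              intro b; congr 1; ring
            simp only [harg]
            apply vanish1D μ ψ hψ_nontriv
            rw [norm_mul, hu1, one_mul]
            exact hC1
          rw [hbint, zero_mul, mul_zero]
  -- assemble
  have main : (μ S).toReal • I = 0 := by
    calc (μ S).toReal • I
        = ∫ _u in S, I ∂μ := (setIntegral_const I).symm
      _ = ∫ u in S, (∫ z in T, F u z ∂μ3) ∂μ := by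
          apply setIntegral_congr_fun s_measurable
          intro u hu
          exact (step1 u hu).symm
      _ = ∫ z in T, (∫ u in S, F u z ∂μ) ∂μ3 := integral_integral_swap hIntT
      _ = ∫ z in T, T₀.indicator (fun z => ∫ u in S, F u z ∂μ) z ∂μ3 :=
          setIntegral_congr_fun hT hptwise
      _ = ∫ z in T ∩ T₀, (∫ u in S, F u z ∂μ) ∂μ3 := setIntegral_indicator hT₀
      _ = ∫ z in T₀, (∫ u in S, F u z ∂μ) ∂μ3 := by
          rw [Set.inter_eq_right.mpr hT₀sub]
      _ = ∫ u in S, (∫ z in T₀, F u z ∂μ3) ∂μ := (integral_integral_swap hIntT₀).symm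
      _ = ∫ _u in S, (0:ℂ) ∂μ := by
          apply setIntegral_congr_fun s_measurable
          intro u hu
          exact inner0 u hu
      _ = 0 := integral_zero _ _
  have hpos : 0 < (μ S).toReal :=
    ENNReal.toReal_pos (s_pos μ).ne' (s_lt_top μ).ne
  exact (smul_eq_zero.mp main).resolve_left (ne_of_gt hpos)
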